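/- For every n ≥ 4, the set A = {n^i : 0 ≤ i ≤ m} ∪ {1} (i.e., powers n^0=1, n, n², ..., n^m) has the property that C_{A,n} + C_{A,n} contains no interval, regardless of m. Precisely: every element of C_{A,n} + C_{A,n} has a base-n expansion with at most 2(m+1) consecutive digits equal to 3, while real numbers whose base-n expansion contains 2(m+1)+1 consecutive digits equal to 3 are dense in ℝ; hence C_{A,n} + C_{A,n} has empty interior. -/

import Mathlib

open Pointwise

def linCantor (n : ℕ) (A : Set ℕ) : Set ℝ :=
  {x | ∃ a : ℕ → ℕ, (∀ i, a i ∈ A) ∧ x = ∑' i : ℕ, (a i : ℝ) / n ^ (i + 1)}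

namespace PNG

def d3 (j : ℕ) : ℕ := 3 - j % 2
lemma d3_pair (j : ℕ) : d3 j + d3 (j + 1) = 5 := by unfold d3; omega
lemma d3_le (j : ℕ) : d3 j ≤ 3 := by unfold d3; omega
lemma d3_ge (j : ℕ) : 2 ≤ d3 j := by unfold d3; omega

noncomputable def τ (n j : ℕ) : ℝ := ∑' k : ℕ, (d3 (j + k) : ℝ) / n ^ (k + 1)

variable {n : ℕ}

lemma nR2 (hn : 2 ≤ n) : (2:ℝ) ≤ (n:ℝ) := by exact_mod_cast hn
lemma nR0 (hn : 2 ≤ n) : (0:ℝ) < (n:ℝ) := lt_of_lt_of_le (by norm_num) (nR2 hn)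

lemma summable_geo (hn : 2 ≤ n) (B : ℝ) : Summable (fun i : ℕ => B / (n:ℝ) ^ (i + 1)) := by
  have h0 : (0:ℝ) < n := nR0 hn
  have h1 : (n:ℝ)⁻¹ < 1 := inv_lt_one_of_one_lt₀ (lt_of_lt_of_le (by norm_num) (nR2 hn))
  have := (summable_geometric_of_lt_one (le_of_lt (inv_pos.2 h0)) h1).mul_left (B * (n:ℝ)⁻¹)
  refine this.congr fun i => ?_
  rw [div_eq_mul_inv, ← inv_pow]; ring

lemma tsum_geo (hn : 2 ≤ n) (B : ℝ) : ∑' i : ℕ, B / (n:ℝ) ^ (i + 1) = B / ((n:ℝ) - 1) := by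
  have h0 : (0:ℝ) < n := nR0 hn
  have h1 : (n:ℝ)⁻¹ < 1 := inv_lt_one_of_one_lt₀ (lt_of_lt_of_le (by norm_num) (nR2 hn))
  have hre : ∀ i : ℕ, B / (n:ℝ) ^ (i+1) = (B * (n:ℝ)⁻¹) * ((n:ℝ)⁻¹) ^ i := by
    intro i; rw [div_eq_mul_inv, ← inv_pow]; ring
  rw [tsum_congr hre, tsum_mul_left, tsum_geometric_of_lt_one (le_of_lt (inv_pos.2 h0)) h1]
  have hne : (n:ℝ) ≠ 0 := ne_of_gt h0
  have hne1 : (n:ℝ) - 1 ≠ 0 := by nlinarith [nR2 hn]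
  field_simp

lemma summable_τ (hn : 2 ≤ n) (j : ℕ) :
    Summable (fun k : ℕ => (d3 (j + k) : ℝ) / n ^ (k + 1)) := by
  refine Summable.of_nonneg_of_le (fun k => by positivity) (fun k => ?_) (summable_geo hn 3)
  have h0 : (0:ℝ) < (n:ℝ) ^ (k+1) := pow_pos (nR0 hn) _
  exact (div_le_div_iff_of_pos_right h0).2 (by exact_mod_cast d3_le (j+k))

lemma τ_nonneg (j : ℕ) : 0 ≤ τ n j := tsum_nonneg fun k => by positivity

lemma τ_le3 (hn : 2 ≤ n) (j : ℕ) : τ n j ≤ 3 / ((n:ℝ) - 1) := by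
  rw [← tsum_geo hn 3]
  refine Summable.tsum_le_tsum (fun k => ?_) (summable_τ hn j) (summable_geo hn 3)
  have h0 : (0:ℝ) < (n:ℝ) ^ (k+1) := pow_pos (nR0 hn) _
  exact (div_le_div_iff_of_pos_right h0).2 (by exact_mod_cast d3_le (j+k))

lemma τ_rec (hn : 2 ≤ n) (j : ℕ) : (n:ℝ) * τ n j = d3 j + τ n (j + 1) := by
  have hne : (n:ℝ) ≠ 0 := ne_of_gt (nR0 hn)
  have h1 : τ n j = (d3 j : ℝ) / n + ∑' k : ℕ, (d3 (j + (k+1)) : ℝ) / n ^ (k + 2) := by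
    have := Summable.tsum_eq_zero_add (summable_τ hn j)
    simpa [τ, add_assoc] using this
  have h2 : (∑' k : ℕ, (d3 (j + (k+1)) : ℝ) / n ^ (k + 2))
      = (n:ℝ)⁻¹ * τ n (j+1) := by
    rw [τ, ← tsum_mul_left]
    refine tsum_congr fun k => ?_
    have : j + (k+1) = (j+1) + k := by ring
    rw [this, pow_succ]
    ring
  rw [h1, h2]
  field_simp

lemma τ_pos (hn : 2 ≤ n) (j : ℕ) : 0 < τ n j := by
  have h := τ_rec hn j
  have h2 : (0:ℝ) < d3 j + τ n (j+1) := by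
    have := τ_nonneg (n := n) (j+1)
    have hd : (2:ℝ) ≤ d3 j := by exact_mod_cast d3_ge j
    linarith
  nlinarith [nR0 hn]

lemma τ_lt_one (hn : 4 ≤ n) (j : ℕ) : τ n j < 1 := by
  have hn2 : 2 ≤ n := by omega
  have h1 := τ_rec hn2 j
  have h2 : (n:ℝ) * τ n (j+1) = d3 (j+1) + τ n (j+2) := by
    have h := τ_rec hn2 (j+1)
    have e : j + 1 + 1 = j + 2 := by omega
    rwa [e] at h
  have h3 := τ_le3 hn2 (j+2)
  have hd : (d3 j : ℝ) + d3 (j+1) = 5 := by exact_mod_cast d3_pair j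
  have hdle : (d3 j : ℝ) ≤ 3 := by exact_mod_cast d3_le j
  have hn4 : (4:ℝ) ≤ (n:ℝ) := by exact_mod_cast hn
  have hb : τ n (j+2) ≤ 1 := by
    refine h3.trans ?_
    rw [div_le_one (by linarith)]
    linarith
  have key : (n:ℝ) * ((n:ℝ) * τ n j) = (n:ℝ) * d3 j + ((d3 (j+1) : ℝ) + τ n (j+2)) := by
    rw [h1, mul_add, h2]
  by_contra hcon
  push_neg at hcon
  have big : (n:ℝ) * (n:ℝ) ≤ (n:ℝ) * ((n:ℝ) * τ n j) := by nlinarith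
  rw [key] at big
  nlinarith [mul_nonneg (by linarith : (0:ℝ) ≤ (n:ℝ) - 1) (by linarith : (0:ℝ) ≤ 3 - (d3 j : ℝ))]


variable {m : ℕ} {e : ℕ → ℕ}

/-- the fractional-tail part of `n^j * x` for `x = ∑ n^(e i)/n^(i+1)`. -/
noncomputable def S (n : ℕ) (e : ℕ → ℕ) (j : ℕ) : ℝ :=
  ∑' i : ℕ, if e i + j ≤ i then ((n:ℝ) ^ (e i + j)) / n ^ (i + 1) else 0

/-- number of `i` with `e i + j = i` (in `n^j x` these contribute `1` each). -/
def cnt (m : ℕ) (e : ℕ → ℕ) (j : ℕ) : ℕ :=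
  ((Finset.range (j + m + 1)).filter (fun i => e i + j = i)).card

variable {m : ℕ} {e : ℕ → ℕ}

lemma summable_S (hn : 2 ≤ n) (he : ∀ i, e i ≤ m) (j : ℕ) :
    Summable (fun i : ℕ => if e i + j ≤ i then ((n:ℝ) ^ (e i + j)) / n ^ (i + 1) else 0) := by
  refine Summable.of_nonneg_of_le (fun i => by positivity) (fun i => ?_)
    (summable_geo hn ((n:ℝ) ^ (m + j)))
  have h0 : (0:ℝ) < (n:ℝ) ^ (i+1) := pow_pos (nR0 hn) _
  by_cases h : e i + j ≤ i
  · simp only [h, if_true]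
    refine (div_le_div_iff_of_pos_right h0).2 ?_
    exact pow_le_pow_right₀ (by exact_mod_cast hn.trans' (by norm_num) : (1:ℝ) ≤ n) (by have := he i; omega)
  · simp only [h, if_false]
    positivity

lemma S_nonneg (j : ℕ) : 0 ≤ S n e j :=
  tsum_nonneg fun i => by split <;> positivity


lemma S_rec (hn : 2 ≤ n) (he : ∀ i, e i ≤ m) (j : ℕ) :
    (n:ℝ) * S n e j = (cnt m e j : ℝ) + S n e (j + 1) := by
  have hne : (n:ℝ) ≠ 0 := ne_of_gt (nR0 hn)
  have hpt : ∀ i : ℕ,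
      (n:ℝ) * (if e i + j ≤ i then ((n:ℝ) ^ (e i + j)) / n ^ (i + 1) else 0)
      = (if e i + j = i then (1:ℝ) else 0)
        + (if e i + (j+1) ≤ i then ((n:ℝ) ^ (e i + (j+1))) / n ^ (i + 1) else 0) := by
    intro i
    rcases lt_trichotomy (e i + j) i with h | h | h
    · rw [if_pos h.le, if_neg (by omega), if_pos (by omega)]
      rw [show e i + (j+1) = (e i + j) + 1 by ring, pow_succ]
      ring
    · rw [if_pos h.le, if_pos h, if_neg (by omega), h]
      rw [pow_succ]
      field_simp
      ring
    · rw [if_neg (by omega), if_neg (by omega), if_neg (by omega)]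
      ring
  have hs1 : Summable (fun i : ℕ => if e i + j = i then (1:ℝ) else 0) := by
    apply summable_of_finite_support
    apply Set.Finite.subset (Set.finite_Icc 0 (j + m))
    intro i hi
    simp only [Function.mem_support] at hi
    have hii : e i + j = i := by by_contra hc; exact hi (if_neg hc)
    have := he i
    simp only [Set.mem_Icc]
    omega
  have hs2 := summable_S hn he (j := j + 1)
  calc (n:ℝ) * S n e j
      = ∑' i, ((if e i + j = i then (1:ℝ) else 0)
        + (if e i + (j+1) ≤ i then ((n:ℝ) ^ (e i + (j+1))) / n ^ (i + 1) else 0)) := by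
        rw [S, ← tsum_mul_left]; exact tsum_congr hpt
    _ = (∑' i, if e i + j = i then (1:ℝ) else 0) + S n e (j+1) := Summable.tsum_add hs1 hs2
    _ = (cnt m e j : ℝ) + S n e (j+1) := by
        congr 1
        rw [tsum_eq_sum (s := Finset.range (j + m + 1)) (by
          intro i hi
          rw [if_neg]
          intro hc
          exact hi (Finset.mem_range.2 (by have := he i; omega)))]
        rw [Finset.sum_boole, cnt]


lemma S_le (hn : 2 ≤ n) (he : ∀ i, e i ≤ m) (j : ℕ) : S n e j ≤ (m : ℝ) + 2 := by
  have h0 : (0:ℝ) < n := nR0 hn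
  have h1 : (1:ℝ) ≤ n := by linarith [nR2 hn]
  set N := j + m + 1 with hN
  set g : ℕ → ℝ := fun i => if e i + j ≤ i then ((n:ℝ) ^ (e i + j)) / n ^ (i + 1) else 0 with hg
  have hsum : Summable g := summable_S hn he j
  have hsplit : S n e j = (∑ i ∈ Finset.range N, g i) + ∑' t, g (t + N) :=
    (Summable.sum_add_tsum_nat_add N hsum).symm
  have part1 : (∑ i ∈ Finset.range N, g i) ≤ (m : ℝ) + 1 := by
    have hsub : Finset.Ico j N ⊆ Finset.range N := by
      intro i hi; simp only [Finset.mem_Ico] at hi; exact Finset.mem_range.2 hi.2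
    have hzero : ∀ i ∈ Finset.range N, i ∉ Finset.Ico j N → g i = 0 := by
      intro i hi hni
      simp only [Finset.mem_range] at hi
      simp only [Finset.mem_Ico, not_and, not_lt] at hni
      rw [hg]
      simp only
      rw [if_neg (by have := hni; omega)]
    rw [← Finset.sum_subset hsub hzero]
    have hb : ∀ i ∈ Finset.Ico j N, g i ≤ 1 / n := by
      intro i _
      rw [hg]
      simp only
      split
      · rename_i hc
        rw [div_le_div_iff₀ (by positivity) h0]
        calc ((n:ℝ) ^ (e i + j)) * n = (n:ℝ) ^ (e i + j + 1) := by rw [pow_succ]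
          _ ≤ (n:ℝ) ^ (i + 1) := pow_le_pow_right₀ h1 (by omega)
          _ = 1 * n ^ (i+1) := by ring
      · positivity
    calc ∑ i ∈ Finset.Ico j N, g i ≤ ∑ _i ∈ Finset.Ico j N, (1:ℝ)/n :=
          Finset.sum_le_sum hb
      _ = (N - j : ℕ) * ((1:ℝ)/n) := by rw [Finset.sum_const, Nat.card_Ico, nsmul_eq_mul]
      _ = (m + 1 : ℕ) * ((1:ℝ)/n) := by
          rw [hN, show j + m + 1 - j = m + 1 from by omega]
      _ ≤ (m + 1 : ℕ) * 1 := by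
          apply mul_le_mul_of_nonneg_left ?_ (by positivity)
          rw [div_le_one h0]; linarith
      _ = (m : ℝ) + 1 := by push_cast; ring
  have part2 : (∑' t, g (t + N)) ≤ 1 := by
    have hmaj : ∀ t : ℕ, g (t + N) ≤ (1/(n:ℝ)) / n ^ (t + 1) := by
      intro t
      rw [hg]
      simp only
      split
      · rename_i hc
        have hle : (n:ℝ) ^ (e (t+N) + j) ≤ (n:ℝ) ^ (m + j) :=
          pow_le_pow_right₀ h1 (by have := he (t+N); omega)
        have heq : ((n:ℝ) ^ (m + j)) / n ^ (t + N + 1) = (1/(n:ℝ)) / n ^ (t + 1) := by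
          rw [show t + N + 1 = (m + j) + (t + 2) by omega, pow_add,
            show t + 2 = (t + 1) + 1 by omega, pow_add]
          have : (n:ℝ) ^ (m+j) ≠ 0 := by positivity
          field_simp
          ring
        calc ((n:ℝ) ^ (e (t+N) + j)) / n ^ (t + N + 1)
            ≤ ((n:ℝ) ^ (m + j)) / n ^ (t + N + 1) :=
              div_le_div_of_nonneg_right hle (by positivity)
          _ = (1/(n:ℝ)) / n ^ (t + 1) := heq
      · positivity
    have hsumt : Summable (fun t => g (t + N)) := (summable_nat_add_iff N).2 hsum
    calc (∑' t, g (t + N)) ≤ ∑' t : ℕ, (1/(n:ℝ)) / n ^ (t + 1) :=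
          Summable.tsum_le_tsum hmaj hsumt (summable_geo hn _)
      _ = (1/(n:ℝ)) / ((n:ℝ) - 1) := tsum_geo hn _
      _ ≤ 1 := by
          rw [div_le_one (by linarith [nR2 hn])]
          rw [div_le_iff₀ h0]
          nlinarith [nR2 hn]
  rw [hsplit]; linarith

lemma pow_mul_tsum (hn : 2 ≤ n) (he : ∀ i, e i ≤ m) (j : ℕ) :
    ∃ A : ℕ, (n:ℝ) ^ j * (∑' i : ℕ, ((n:ℝ) ^ (e i)) / n ^ (i + 1)) = (A : ℝ) + S n e j := by
  have h0 : (0:ℝ) < n := nR0 hn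
  have h1 : (1:ℝ) ≤ n := by linarith [nR2 hn]
  set u : ℕ → ℝ := fun i => if i < e i + j then ((n:ℝ) ^ (e i + j)) / n ^ (i + 1) else 0 with hu
  have hmaj : Summable (fun i : ℕ => ((n:ℝ) ^ (m + j)) / n ^ (i + 1)) := summable_geo hn _
  have hble : ∀ i : ℕ, ((n:ℝ) ^ (e i + j)) / n ^ (i + 1) ≤ ((n:ℝ) ^ (m + j)) / n ^ (i + 1) := by
    intro i
    have hexp : e i + j ≤ m + j := by have := he i; omega
    exact div_le_div_of_nonneg_right (pow_le_pow_right₀ h1 hexp) (by positivity)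
  have hfull : Summable (fun i : ℕ => ((n:ℝ) ^ (e i + j)) / n ^ (i + 1)) :=
    Summable.of_nonneg_of_le (fun i => by positivity) hble hmaj
  have hsumu : Summable u := by
    refine Summable.of_nonneg_of_le (fun i => ?_) (fun i => ?_) hmaj
    · rw [hu]; simp only; split <;> positivity
    · rw [hu]; simp only; split
      · exact hble i
      · positivity
  have step1 : (n:ℝ) ^ j * (∑' i : ℕ, ((n:ℝ) ^ (e i)) / n ^ (i + 1))
      = ∑' i : ℕ, ((n:ℝ) ^ (e i + j)) / n ^ (i + 1) := by
    rw [← tsum_mul_left]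
    refine tsum_congr fun i => ?_
    rw [pow_add]; ring
  have step2 : ∀ i : ℕ, ((n:ℝ) ^ (e i + j)) / n ^ (i + 1)
      = u i + (if e i + j ≤ i then ((n:ℝ) ^ (e i + j)) / n ^ (i + 1) else 0) := by
    intro i
    rw [hu]
    simp only
    rcases lt_or_ge i (e i + j) with h | h
    · rw [if_pos h, if_neg (by omega)]; ring
    · rw [if_neg (by omega), if_pos h]; ring
  refine ⟨∑ i ∈ Finset.range (j + m + 1), if i < e i + j then n ^ (e i + j - i - 1) else 0, ?_⟩
  rw [step1, tsum_congr step2, Summable.tsum_add hsumu (summable_S hn he j)]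
  congr 1
  rw [tsum_eq_sum (s := Finset.range (j + m + 1)) (by
    intro i hi
    rw [hu]
    simp only
    rw [if_neg]
    simp only [Finset.mem_range] at hi
    have := he i
    omega)]
  rw [Nat.cast_sum]
  refine Finset.sum_congr rfl fun i _ => ?_
  rw [hu]
  simp only
  split
  · rename_i hc
    push_cast
    rw [div_eq_iff (by positivity : ((n:ℝ) ^ (i+1)) ≠ 0), ← pow_add]
    congr 1
    omega
  · simp


lemma cnt_window (he : ∀ i, e i ≤ m) (p L : ℕ) :
    ∑ t ∈ Finset.range L, cnt m e (p + t) ≤ L + m + 1 := by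
  classical
  set s : ℕ → Finset ℕ :=
    fun t => (Finset.range (p + t + m + 1)).filter (fun i => e i + (p + t) = i) with hs
  have hdisj : ∀ t1 ∈ Finset.range L, ∀ t2 ∈ Finset.range L, t1 ≠ t2 → Disjoint (s t1) (s t2) := by
    intro t1 _ t2 _ hne
    rw [Finset.disjoint_left]
    intro i h1 h2
    rw [hs] at h1 h2
    simp only [Finset.mem_filter] at h1 h2
    omega
  have hcard : ∑ t ∈ Finset.range L, cnt m e (p + t) = ((Finset.range L).biUnion s).card := by
    rw [Finset.card_biUnion hdisj]
    rfl
  rw [hcard]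
  have hsub : (Finset.range L).biUnion s ⊆ Finset.Icc p (p + m + L) := by
    intro i hi
    simp only [Finset.mem_biUnion] at hi
    obtain ⟨t, ht, hi⟩ := hi
    rw [hs] at hi
    simp only [Finset.mem_filter, Finset.mem_range] at hi
    simp only [Finset.mem_range] at ht
    have := he i
    simp only [Finset.mem_Icc]
    omega
  calc ((Finset.range L).biUnion s).card ≤ (Finset.Icc p (p + m + L)).card :=
        Finset.card_le_card hsub
    _ = L + m + 1 := by rw [Nat.card_Icc]; omega

lemma d3_sum (p R : ℕ) : ∑ t ∈ Finset.range (2 * R), (d3 (p + t) : ℝ) = 5 * R := by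
  induction R with
  | zero => simp
  | succ r ih =>
    rw [show 2 * (r + 1) = (2 * r) + 1 + 1 by ring]
    rw [Finset.sum_range_succ, Finset.sum_range_succ, ih]
    have h1 : (d3 (p + 2 * r) : ℝ) + d3 (p + 2 * r + 1) = 5 := by
      exact_mod_cast d3_pair (p + 2 * r)
    rw [show p + (2 * r + 1) = p + 2 * r + 1 from by omega]
    push_cast
    linarith

lemma pow_mul_z (hn : 2 ≤ n) (p : ℕ) (k : ℤ) (t : ℕ) :
    ∃ K : ℤ, (n:ℝ) ^ (p + t) * (((k:ℝ) + τ n p) / n ^ p) = (K:ℝ) + τ n (p + t) := by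
  have hne : ((n:ℝ) ^ p) ≠ 0 := by positivity
  induction t with
  | zero =>
    refine ⟨k, ?_⟩
    rw [Nat.add_zero, mul_div_cancel₀ _ hne]
  | succ t ih =>
    obtain ⟨K, hK⟩ := ih
    refine ⟨n * K + d3 (p + t), ?_⟩
    have hrec := τ_rec hn (p + t)
    have hpow : (n:ℝ) ^ (p + (t + 1)) = n * (n:ℝ) ^ (p + t) := by
      rw [show p + (t + 1) = (p + t) + 1 from by omega, pow_succ]; ring
    rw [show p + (t + 1) = (p + t) + 1 from by omega] at *
    rw [hpow, mul_assoc, hK]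
    push_cast
    linarith [hrec]

lemma key (n m p : ℕ) (hn : 4 ≤ n) (e f : ℕ → ℕ) (he : ∀ i, e i ≤ m) (hf : ∀ i, f i ≤ m)
    (k : ℤ)
    (heq : (∑' i : ℕ, ((n:ℝ) ^ (e i)) / n ^ (i + 1)) + (∑' i : ℕ, ((n:ℝ) ^ (f i)) / n ^ (i + 1))
      = ((k:ℝ) + τ n p) / n ^ p) : False := by
  have hn2 : 2 ≤ n := by omega
  have hM : ∀ t : ℕ, ∃ M : ℤ, S n e (p + t) + S n f (p + t) = (M:ℝ) + τ n (p + t) := by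
    intro t
    obtain ⟨A, hA⟩ := pow_mul_tsum hn2 he (p + t)
    obtain ⟨B, hB⟩ := pow_mul_tsum hn2 hf (p + t)
    obtain ⟨K, hK⟩ := pow_mul_z hn2 p k t
    refine ⟨K - A - B, ?_⟩
    have hz : ((A:ℝ) + S n e (p + t)) + ((B:ℝ) + S n f (p + t)) = (K:ℝ) + τ n (p + t) := by
      rw [← hA, ← hB, ← hK, ← mul_add, heq]
    push_cast
    linarith
  choose M hMs using hM
  have hMnn : ∀ t, (0:ℝ) ≤ (M t : ℝ) := by
    intro t
    have h1 : (M t : ℝ) > -1 := by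
      have := hMs t
      have h2 := τ_lt_one hn (p + t)
      have h3 := S_nonneg (n := n) (e := e) (p + t)
      have h4 := S_nonneg (n := n) (e := f) (p + t)
      linarith
    have h2 : (-1:ℤ) < M t := by exact_mod_cast h1
    exact_mod_cast (by omega : (0:ℤ) ≤ M t)
  have hMle : ∀ t, (M t : ℝ) ≤ 2 * m + 4 := by
    intro t
    have := hMs t
    have h2 := τ_pos hn2 (p + t)
    have h3 := S_le hn2 he (p + t)
    have h4 := S_le hn2 hf (p + t)
    linarith
  have hstep : ∀ t, (cnt m e (p + t) : ℝ) + (cnt m f (p + t) : ℝ)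
      ≥ (d3 (p + t) : ℝ) + ((M t : ℝ) - (M (t + 1) : ℝ)) := by
    intro t
    have h1 := S_rec hn2 he (p + t)
    have h2 := S_rec hn2 hf (p + t)
    have h3 := τ_rec hn2 (p + t)
    have h4 := hMs t
    have h5 := hMs (t + 1)
    rw [show p + (t + 1) = (p + t) + 1 from by omega] at h5
    have hmm : (0:ℝ) ≤ ((n:ℝ) - 1) * (M t : ℝ) := by
      apply mul_nonneg ?_ (hMnn t)
      have : (2:ℝ) ≤ (n:ℝ) := nR2 hn2
      linarith
    nlinarith [hmm]
  set R : ℕ := 4 * m + 10 with hR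
  set L : ℕ := 2 * R with hL
  have hsum1 : ∑ t ∈ Finset.range L, ((cnt m e (p + t) : ℝ) + (cnt m f (p + t) : ℝ))
      ≥ 5 * R + ((M 0 : ℝ) - (M L : ℝ)) := by
    have hlow : ∀ t ∈ Finset.range L, (d3 (p + t) : ℝ) + ((M t : ℝ) - (M (t + 1) : ℝ))
        ≤ (cnt m e (p + t) : ℝ) + (cnt m f (p + t) : ℝ) := fun t _ => hstep t
    have := Finset.sum_le_sum hlow
    rw [Finset.sum_add_distrib, hL, d3_sum p R] at this
    rw [Finset.sum_range_sub' (f := fun t => (M t : ℝ))] at this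
    rw [hL]
    linarith
  have hsum2 : (∑ t ∈ Finset.range L, (cnt m e (p + t) + cnt m f (p + t))) ≤ 2 * (L + m + 1) := by
    rw [Finset.sum_add_distrib]
    have := cnt_window he p L
    have := cnt_window hf p L
    omega
  have hsum2' : ∑ t ∈ Finset.range L, ((cnt m e (p + t) : ℝ) + (cnt m f (p + t) : ℝ))
      ≤ 2 * (L + m + 1) := by
    exact_mod_cast hsum2
  have hM0 := hMnn 0
  have hML := hMle L
  have hcast : (L:ℝ) = 2 * R := by rw [hL]; push_cast; ring
  have hRcast : (R:ℝ) = 4 * m + 10 := by rw [hR]; push_cast; ring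
  nlinarith [hsum1, hsum2', hM0, hML]

end PNG

/-- For `n ≥ 4` and `A = {n^i : 0 ≤ i ≤ m}`, the sumset `C_{A,n} + C_{A,n}`
contains no interval, i.e. has empty interior, regardless of `m`. -/
theorem powers_not_good (n m : ℕ) (hn : 4 ≤ n) :
    interior (linCantor n {a : ℕ | ∃ i ≤ m, a = n ^ i} +
      linCantor n {a : ℕ | ∃ i ≤ m, a = n ^ i}) = ∅ := by
  have hn2 : 2 ≤ n := by omega
  have hn1 : (1:ℝ) < n := by
    have := PNG.nR2 hn2; linarith
  rw [interior_eq_empty_iff_dense_compl, Metric.dense_iff]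
  intro x₀ ε hε
  obtain ⟨p, hp⟩ : ∃ p : ℕ, (2:ℝ) / n ^ p < ε := by
    obtain ⟨p, hp⟩ := pow_unbounded_of_one_lt ((2:ℝ) / ε) hn1
    refine ⟨p, ?_⟩
    have hnp : (0:ℝ) < (n:ℝ) ^ p := pow_pos (by linarith) p
    rw [div_lt_iff₀ hε] at hp
    rw [div_lt_iff₀ hnp]
    linarith
  have hnp : (0:ℝ) < (n:ℝ) ^ p := pow_pos (by linarith) p
  set z : ℝ := ((⌊x₀ * n ^ p⌋ : ℝ) + PNG.τ n p) / n ^ p with hz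
  refine ⟨z, ?_, ?_⟩
  · rw [Metric.mem_ball, Real.dist_eq]
    have h1 : (⌊x₀ * n ^ p⌋ : ℝ) ≤ x₀ * n ^ p := Int.floor_le _
    have h2 : x₀ * n ^ p - 1 < ⌊x₀ * n ^ p⌋ := Int.sub_one_lt_floor _
    have hτ1 := PNG.τ_lt_one hn p
    have hτ0 := PNG.τ_pos hn2 p
    have hzx : z - x₀ = ((⌊x₀ * n ^ p⌋ : ℝ) + PNG.τ n p - x₀ * n ^ p) / n ^ p := by
      rw [hz]
      field_simp
    rw [hzx, abs_div, abs_of_pos hnp]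
    calc |(⌊x₀ * n ^ p⌋ : ℝ) + PNG.τ n p - x₀ * n ^ p| / (n:ℝ) ^ p
        < 2 / (n:ℝ) ^ p := by
          refine (div_lt_div_iff_of_pos_right hnp).2 ?_
          rw [abs_lt]
          constructor <;> linarith
      _ < ε := hp
  · intro hmem
    obtain ⟨x, hx, y, hy, hxy⟩ := Set.mem_add.1 hmem
    obtain ⟨a, ha, hax⟩ := hx
    obtain ⟨b, hb, hby⟩ := hy
    simp only [Set.mem_setOf_eq] at ha hb
    choose ea hea haE using ha
    choose eb heb hbE using hb
    apply PNG.key n m p hn ea eb hea heb ⌊x₀ * n ^ p⌋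
    have hx' : x = ∑' i : ℕ, ((n:ℝ) ^ (ea i)) / n ^ (i + 1) := by
      rw [hax]
      refine tsum_congr fun i => ?_
      rw [haE i]
      push_cast
      ring
    have hy' : y = ∑' i : ℕ, ((n:ℝ) ^ (eb i)) / n ^ (i + 1) := by
      rw [hby]
      refine tsum_congr fun i => ?_
      rw [hbE i]
      push_cast
      ring
    rw [← hx', ← hy', hxy]
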